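/- (Theorem 3, error bound) Let σ > 0, let p be an even positive integer, and let ε > 0 be such that 1 − ε (p−1)!! σ^p − (ε²/2)(2p−1)!! σ^{2p} > 0. Let H be the differential entropy of the density p(x) = C(ε) p_G(x) exp(−ε x^p), and let H₁ = log(√(2π) σ (1 − ε σ^p (p−1)!!)) + (1 − ε σ^p (p−1)!!)^{−1} · (1/2 + ε σ^p ((p−1)!! − (1/2)(p+1)!!)) be the first-order entropy approximation. Then |H − H₁| ≤ log(1 + β_p (ε²/2)(2p−1)!! σ^{2p}) + β_p (ε²/4)(2p+1)!! σ^{2p} + β_p (ε³/2)(3p−1)!! σ^{3p}, where β_p = (1 − ε (p−1)!! σ^p − (ε²/2)(2p−1)!! σ^{2p})^{−1}. -/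

import Mathlib

open MeasureTheory Real

/-- The centered Gaussian density with standard deviation `σ`. -/
noncomputable def pG (σ x : ℝ) : ℝ :=
  (1 / (Real.sqrt (2 * Real.pi) * σ)) * Real.exp (-x ^ 2 / (2 * σ ^ 2))

lemma gamma_half (k : ℕ) :
    Real.Gamma ((k : ℝ) + 1/2) = (Nat.doubleFactorial (2*k-1) : ℝ) / 2 ^ k * Real.sqrt π := by
  induction k with
  | zero => simpa using Real.Gamma_one_half_eq
  | succ n ih =>
      have h : ((n+1 : ℕ) : ℝ) + 1/2 = ((n : ℝ) + 1/2) + 1 := by push_cast; ring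
      rw [h, Real.Gamma_add_one (by positivity), ih]
      have h2 : 2*(n+1) - 1 = (2*n - 1) + 2 ∨ n = 0 := by omega
      rcases h2 with h2 | rfl
      · rw [h2, Nat.doubleFactorial_add_two]
        have : (2*n - 1) + 2 = 2*n + 1 := by omega
        rw [this]
        push_cast
        ring
      · norm_num [Nat.doubleFactorial]

lemma integral_even_fun {f : ℝ → ℝ} (he : ∀ x, f (-x) = f x) :
    ∫ x, f x = 2 * ∫ x in Set.Ioi 0, f x := by
  rw [← integral_comp_abs (f := f)]
  congr 1
  ext x
  rcases le_or_gt 0 x with h | h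
  · rw [abs_of_nonneg h]
  · rw [abs_of_neg h, he]

lemma integrable_pow_gauss {b : ℝ} (hb : 0 < b) (n : ℕ) :
    Integrable fun x : ℝ => x ^ n * Real.exp (-b * x ^ 2) := by
  have := integrable_rpow_mul_exp_neg_mul_sq hb (s := (n:ℝ))
    (lt_of_lt_of_le (by norm_num) (Nat.cast_nonneg n))
  simpa [Real.rpow_natCast] using this

lemma integral_pow_gauss {b : ℝ} (hb : 0 < b) (k : ℕ) :
    ∫ x : ℝ, x ^ (2*k) * Real.exp (-b * x ^ 2)
      = (Nat.doubleFactorial (2*k-1) : ℝ) / (2*b) ^ k * Real.sqrt (π / b) := by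
  rw [integral_even_fun (fun x => by
    have h2 : Even (2*k) := even_two_mul k
    rw [h2.neg_pow, neg_sq])]
  have hioi : ∫ x in Set.Ioi (0:ℝ), x ^ (2*k) * Real.exp (-b * x ^ 2)
      = ∫ x in Set.Ioi (0:ℝ), x ^ ((2*k : ℕ) : ℝ) * Real.exp (-b * x ^ (2:ℝ)) := by
    refine setIntegral_congr_fun measurableSet_Ioi (fun x hx => ?_)
    rw [Real.rpow_natCast, show (2:ℝ) = ((2:ℕ):ℝ) by norm_num, Real.rpow_natCast]
  rw [hioi, integral_rpow_mul_exp_neg_mul_rpow (by norm_num)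
      (lt_of_lt_of_le (by norm_num) (Nat.cast_nonneg _)) hb]
  have hg : (((2*k : ℕ):ℝ) + 1) / 2 = (k:ℝ) + 1/2 := by push_cast; ring
  rw [hg, gamma_half]
  have hb' : (0:ℝ) ≤ b := hb.le
  have h1 : b ^ (-(((2*k : ℕ):ℝ) + 1) / 2) = (b ^ k)⁻¹ * (Real.sqrt b)⁻¹ := by
    have : -(((2*k : ℕ):ℝ) + 1) / 2 = (-(k:ℝ)) + (-(1/2)) := by push_cast; ring
    rw [this, Real.rpow_add hb, Real.rpow_neg hb', Real.rpow_natCast,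
      Real.rpow_neg hb', Real.sqrt_eq_rpow]
  rw [h1, Real.sqrt_div (le_of_lt Real.pi_pos) b]
  have hsb : Real.sqrt b ≠ 0 := ne_of_gt (Real.sqrt_pos.mpr hb)
  have hbk : (b:ℝ) ^ k ≠ 0 := pow_ne_zero _ (ne_of_gt hb)
  rw [mul_pow]
  field_simp

lemma pG_eq (σ x : ℝ) :
    pG σ x = (1 / (Real.sqrt (2 * Real.pi) * σ)) * Real.exp (-(1/(2*σ^2)) * x ^ 2) := by
  rw [pG, show -x^2/(2*σ^2) = -(1/(2*σ^2)) * x^2 by ring]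

lemma pG_pos {σ : ℝ} (hσ : 0 < σ) (x : ℝ) : 0 < pG σ x := by
  rw [pG]
  have : 0 < Real.sqrt (2 * Real.pi) := Real.sqrt_pos.mpr (by positivity)
  positivity

lemma continuous_pG (σ : ℝ) : Continuous (fun x => pG σ x) := by
  unfold pG; fun_prop

lemma integrable_pG_pow {σ : ℝ} (hσ : 0 < σ) (n : ℕ) :
    Integrable fun x : ℝ => pG σ x * x ^ n := by
  have hb : (0:ℝ) < 1/(2*σ^2) := by positivity
  have h := (integrable_pow_gauss hb n).const_mul (1 / (Real.sqrt (2 * Real.pi) * σ))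
  refine h.congr (Filter.Eventually.of_forall fun x => ?_)
  simp only [pG_eq]; ring

lemma integral_pG_pow {σ : ℝ} (hσ : 0 < σ) (k : ℕ) :
    ∫ x : ℝ, pG σ x * x ^ (2*k)
      = (Nat.doubleFactorial (2*k-1) : ℝ) * σ ^ (2*k) := by
  have hb : (0:ℝ) < 1/(2*σ^2) := by positivity
  have h1 : ∫ x : ℝ, pG σ x * x ^ (2*k)
      = (1 / (Real.sqrt (2 * Real.pi) * σ)) * ∫ x : ℝ, x ^ (2*k) * Real.exp (-(1/(2*σ^2)) * x ^ 2) := by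
    rw [← integral_const_mul]
    congr 1; funext x; rw [pG_eq]; ring
  rw [h1, integral_pow_gauss hb]
  have h2 : (2 * (1/(2*σ^2))) = (σ^2)⁻¹ := by field_simp
  have h3 : π / (1/(2*σ^2)) = 2*π*σ^2 := by field_simp
  rw [h2, h3]
  have h4 : Real.sqrt (2*π*σ^2) = Real.sqrt (2*π) * σ := by
    rw [Real.sqrt_mul (by positivity), Real.sqrt_sq hσ.le]
  rw [h4]
  have hs : Real.sqrt (2*π) ≠ 0 := ne_of_gt (Real.sqrt_pos.mpr (by positivity))
  have hσ' : σ ≠ 0 := ne_of_gt hσ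
  field_simp
  ring_nf
  rw [← mul_pow, mul_inv_cancel₀ hσ', one_pow]

lemma integral_pG_pow' {σ : ℝ} (hσ : 0 < σ) (m k : ℕ) (hm : m = 2*k) :
    ∫ x : ℝ, pG σ x * x ^ m = (Nat.doubleFactorial (m-1) : ℝ) * σ ^ m := by
  subst hm; exact integral_pG_pow hσ k

lemma exp_neg_le_quad {t : ℝ} (ht : 0 ≤ t) : Real.exp (-t) ≤ 1 - t + t^2/2 := by
  have he : 1 + t + t^2/2 ≤ Real.exp t := Real.quadratic_le_exp_of_nonneg ht
  have h1 : Real.exp (-t) * Real.exp t = 1 := by rw [← Real.exp_add]; simp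
  have h2 : Real.exp (-t) * (1 + t + t^2/2) ≤ Real.exp (-t) * Real.exp t :=
    mul_le_mul_of_nonneg_left he (Real.exp_pos _).le
  nlinarith [Real.exp_pos (-t), sq_nonneg t, sq_nonneg (t*t), sq_nonneg (t - 1)]

lemma integrable_pG_pow_exp {σ : ℝ} (hσ : 0 < σ) {ε : ℝ} (hε : 0 ≤ ε) {p : ℕ} (hpe : Even p)
    (n : ℕ) :
    Integrable fun x : ℝ => pG σ x * x ^ (2*n) * Real.exp (-ε * x ^ p) := by
  refine (integrable_pG_pow hσ (2*n)).mono' ?_ (Filter.Eventually.of_forall fun x => ?_)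
  · have hc : Continuous fun x : ℝ => pG σ x * x ^ (2*n) * Real.exp (-ε * x ^ p) := by
      unfold pG; fun_prop
    exact hc.aestronglyMeasurable
  · have hxp : (0:ℝ) ≤ x ^ p := hpe.pow_nonneg x
    have h1 := (pG_pos hσ x).le
    have h2 : (0:ℝ) ≤ x ^ (2*n) := (even_two_mul n).pow_nonneg x
    have h0 : (0:ℝ) ≤ pG σ x * x ^ (2*n) := mul_nonneg h1 h2
    have hexp : Real.exp (-ε * x ^ p) ≤ 1 := by
      rw [Real.exp_le_one_iff]
      nlinarith
    rw [Real.norm_eq_abs, abs_of_nonneg (mul_nonneg h0 (Real.exp_pos _).le)]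
    exact mul_le_of_le_one_right h0 hexp

lemma sandwich_low {σ ε : ℝ} (hσ : 0 < σ) (hε : 0 < ε) {p : ℕ} (hpe : Even p) (n : ℕ) :
    (∫ x : ℝ, pG σ x * x ^ (2*n)) - ε * ∫ x : ℝ, pG σ x * x ^ (2*n+p)
      ≤ ∫ x : ℝ, pG σ x * x ^ (2*n) * Real.exp (-ε * x ^ p) := by
  have hint : Integrable fun x : ℝ =>
      pG σ x * x ^ (2*n) - ε * (pG σ x * x ^ (2*n+p)) :=
    (integrable_pG_pow hσ (2*n)).sub ((integrable_pG_pow hσ (2*n+p)).const_mul ε)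
  have hmono := integral_mono hint (integrable_pG_pow_exp hσ hε.le hpe n) (fun x => by
    have h0 : (0:ℝ) ≤ pG σ x * x ^ (2*n) :=
      mul_nonneg (pG_pos hσ x).le ((even_two_mul n).pow_nonneg x)
    have key := mul_le_mul_of_nonneg_left (Real.one_sub_le_exp_neg (ε * x ^ p)) h0
    rw [← neg_mul] at key
    have hxpow : (x:ℝ) ^ (2*n+p) = x ^ (2*n) * x ^ p := pow_add x (2*n) p
    simp only [hxpow]
    nlinarith [key])
  calc (∫ x : ℝ, pG σ x * x ^ (2*n)) - ε * ∫ x : ℝ, pG σ x * x ^ (2*n+p)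
      = ∫ x : ℝ, pG σ x * x ^ (2*n) - ε * (pG σ x * x ^ (2*n+p)) := by
        rw [integral_sub (integrable_pG_pow hσ (2*n))
          ((integrable_pG_pow hσ (2*n+p)).const_mul ε), integral_const_mul]
    _ ≤ _ := hmono

lemma sandwich_high {σ ε : ℝ} (hσ : 0 < σ) (hε : 0 < ε) {p : ℕ} (hpe : Even p) (n : ℕ) :
    ∫ x : ℝ, pG σ x * x ^ (2*n) * Real.exp (-ε * x ^ p)
      ≤ (∫ x : ℝ, pG σ x * x ^ (2*n)) - ε * (∫ x : ℝ, pG σ x * x ^ (2*n+p))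
        + ε^2/2 * ∫ x : ℝ, pG σ x * x ^ (2*n+2*p) := by
  have hint : Integrable fun x : ℝ =>
      pG σ x * x ^ (2*n) - ε * (pG σ x * x ^ (2*n+p)) + ε^2/2 * (pG σ x * x ^ (2*n+2*p)) :=
    ((integrable_pG_pow hσ (2*n)).sub ((integrable_pG_pow hσ (2*n+p)).const_mul ε)).add
      ((integrable_pG_pow hσ (2*n+2*p)).const_mul (ε^2/2))
  have hmono := integral_mono (integrable_pG_pow_exp hσ hε.le hpe n) hint (fun x => by
    have h0 : (0:ℝ) ≤ pG σ x * x ^ (2*n) :=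
      mul_nonneg (pG_pos hσ x).le ((even_two_mul n).pow_nonneg x)
    have hxp : (0:ℝ) ≤ ε * x ^ p := mul_nonneg hε.le (hpe.pow_nonneg x)
    have key := mul_le_mul_of_nonneg_left (exp_neg_le_quad hxp) h0
    rw [← neg_mul] at key
    have hxpow : (x:ℝ) ^ (2*n+p) = x ^ (2*n) * x ^ p := pow_add x (2*n) p
    have hxpow2 : (x:ℝ) ^ (2*n+2*p) = x ^ (2*n) * (x ^ p)^2 := by ring
    simp only [hxpow, hxpow2]
    nlinarith [key])
  have hA : Integrable (fun x : ℝ => pG σ x * x ^ (2*n) - ε * (pG σ x * x ^ (2*n+p))) := by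
    exact (integrable_pG_pow hσ (2*n)).sub ((integrable_pG_pow hσ (2*n+p)).const_mul ε)
  have hB : Integrable (fun x : ℝ => ε^2/2 * (pG σ x * x ^ (2*n+2*p))) := by
    exact (integrable_pG_pow hσ (2*n+2*p)).const_mul (ε^2/2)
  calc ∫ x : ℝ, pG σ x * x ^ (2*n) * Real.exp (-ε * x ^ p) ≤ _ := hmono
    _ = (∫ x : ℝ, pG σ x * x ^ (2*n)) - ε * (∫ x : ℝ, pG σ x * x ^ (2*n+p))
        + ε^2/2 * ∫ x : ℝ, pG σ x * x ^ (2*n+2*p) := by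
        rw [integral_add hA hB,
          integral_sub (integrable_pG_pow hσ (2*n))
            ((integrable_pG_pow hσ (2*n+p)).const_mul ε),
          integral_const_mul, integral_const_mul]

lemma entropy_eq {σ ε : ℝ} (hσ : 0 < σ) (hε : 0 < ε) {p : ℕ} (hpe : Even p)
    (Z : ℝ) (hZdef : Z = ∫ x : ℝ, pG σ x * Real.exp (-ε * x ^ p)) (hZ : 0 < Z) :
    -∫ x : ℝ, (Z⁻¹ * pG σ x * Real.exp (-ε * x ^ p)) *
        Real.log (Z⁻¹ * pG σ x * Real.exp (-ε * x ^ p))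
      = Real.log (Real.sqrt (2 * π) * σ) + Real.log Z
        + Z⁻¹ * ((∫ x : ℝ, pG σ x * x ^ 2 * Real.exp (-ε * x ^ p)) / (2 * σ ^ 2)
            + ε * ∫ x : ℝ, pG σ x * x ^ p * Real.exp (-ε * x ^ p)) := by
  obtain ⟨q, hq⟩ := hpe
  have hp2 : p = 2 * q := by omega
  have hsp : (0:ℝ) < Real.sqrt (2 * π) * σ := by
    have : (0:ℝ) < Real.sqrt (2 * π) := Real.sqrt_pos.mpr (by positivity)
    positivity
  have hpe' : Even p := ⟨q, hq⟩
  have hI0 : Integrable fun x : ℝ => pG σ x * Real.exp (-ε * x ^ p) := by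
    have := integrable_pG_pow_exp hσ hε.le hpe' 0
    simpa using this
  have hI2 : Integrable fun x : ℝ => pG σ x * x ^ 2 * Real.exp (-ε * x ^ p) := by
    have := integrable_pG_pow_exp hσ hε.le hpe' 1
    simpa using this
  have hIp : Integrable fun x : ℝ => pG σ x * x ^ p * Real.exp (-ε * x ^ p) := by
    have := integrable_pG_pow_exp hσ hε.le hpe' q
    rw [← hp2] at this
    exact this
  have hform : ∀ x : ℝ, (Z⁻¹ * pG σ x * Real.exp (-ε * x ^ p)) *
        Real.log (Z⁻¹ * pG σ x * Real.exp (-ε * x ^ p))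
      = (-Real.log Z - Real.log (Real.sqrt (2 * π) * σ)) *
          (Z⁻¹ * (pG σ x * Real.exp (-ε * x ^ p)))
        + Z⁻¹ * (-(1/(2*σ^2)) * (pG σ x * x ^ 2 * Real.exp (-ε * x ^ p))
            - ε * (pG σ x * x ^ p * Real.exp (-ε * x ^ p))) := by
    intro x
    have hlog : Real.log (Z⁻¹ * pG σ x * Real.exp (-ε * x ^ p))
        = -Real.log Z - Real.log (Real.sqrt (2 * π) * σ) - x^2/(2*σ^2) - ε * x ^ p := by
      rw [Real.log_mul (mul_ne_zero (inv_ne_zero hZ.ne') (pG_pos hσ x).ne')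
        (Real.exp_ne_zero _),
        Real.log_mul (inv_ne_zero hZ.ne') (pG_pos hσ x).ne', Real.log_exp, Real.log_inv]
      rw [pG, Real.log_mul (by positivity) (Real.exp_ne_zero _), Real.log_exp,
        one_div, Real.log_inv]
      ring
    rw [hlog]
    ring
  rw [integral_congr_ae (Filter.Eventually.of_forall hform)]
  have hT1 : Integrable fun x : ℝ => (-Real.log Z - Real.log (Real.sqrt (2 * π) * σ)) *
      (Z⁻¹ * (pG σ x * Real.exp (-ε * x ^ p))) := by
    exact ((hI0.const_mul _).const_mul _)
  have hT2 : Integrable fun x : ℝ => Z⁻¹ * (-(1/(2*σ^2)) * (pG σ x * x ^ 2 * Real.exp (-ε * x ^ p))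
      - ε * (pG σ x * x ^ p * Real.exp (-ε * x ^ p))) := by
    exact (((hI2.const_mul _).sub (hIp.const_mul _)).const_mul _)
  rw [integral_add hT1 hT2, integral_const_mul, integral_const_mul, integral_const_mul,
    integral_sub (hI2.const_mul _) (hIp.const_mul _), integral_const_mul, integral_const_mul,
    ← hZdef]
  have hZne : Z ≠ 0 := hZ.ne'
  field_simp
  ring

set_option maxHeartbeats 1000000 in
lemma final_ineq (A B u₂ u₃ Z T t₁ β : ℝ)
    (hB : 0 < B) (hpos : 0 < 1 - A - B) (hβ : β = (1 - A - B)⁻¹)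
    (hZl : 1 - A ≤ Z) (hZu : Z ≤ 1 - A + B)
    (hTl : t₁ - 2*B ≤ T) (hTu : T ≤ t₁ - 2*B + u₂ + u₃)
    (hTnn : 0 ≤ T)
    (hu₂ : 5/2 * B ≤ u₂) (hu₃ : 0 ≤ u₃)
    (ht₁ : t₁ ≤ 1 - A + B) :
    |Real.log Z + T/Z - (Real.log (1-A) + t₁/(1-A))|
      ≤ Real.log (1 + β*B) + β*u₂ + β*u₃ := by
  have hD₁ : (0:ℝ) < 1 - A := by linarith
  have hD₂ : (0:ℝ) < 1 - A + B := by linarith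
  have hZ : (0:ℝ) < Z := lt_of_lt_of_le hD₁ hZl
  have hβpos : 0 < β := hβ ▸ inv_pos.mpr hpos
  have hβ1 : (1 - A)⁻¹ ≤ β := by
    rw [hβ]; exact inv_anti₀ hpos (by linarith)
  have hβ2 : (1 - A + B)⁻¹ ≤ β := by
    rw [hβ]; exact inv_anti₀ hpos (by linarith)
  have hlogu : Real.log Z - Real.log (1-A) ≤ Real.log (1 + β*B) := by
    rw [← Real.log_div hZ.ne' hD₁.ne']
    apply Real.log_le_log (by positivity)
    rw [div_le_iff₀ hD₁]
    have h1 : 1 + β*B = (1-A)/(1-A-B) := by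
      rw [hβ]; field_simp; ring
    rw [h1]
    rw [div_mul_eq_mul_div, le_div_iff₀ hpos]
    nlinarith
  have hlogl : 0 ≤ Real.log Z - Real.log (1-A) := by
    have := Real.log_le_log hD₁ hZl
    linarith
  have hkey : B/(1-A) ≤ Real.log (1 + β*B) := by
    have h1 : 1 + β*B = (1-A)/(1-A-B) := by rw [hβ]; field_simp; ring
    have h2 : (0:ℝ) < 1 + β*B := by positivity
    have h3 := Real.log_le_sub_one_of_pos (inv_pos.mpr h2)
    rw [Real.log_inv] at h3
    have h4 : (1 + β*B)⁻¹ = (1-A-B)/(1-A) := by rw [h1, inv_div]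
    rw [h4] at h3
    have h5 : 1 - (1-A-B)/(1-A) = B/(1-A) := by field_simp; ring
    linarith
  have hlogpos : 0 ≤ Real.log (1 + β*B) := Real.log_nonneg (by nlinarith)
  have hdivu : T/Z - t₁/(1-A) ≤ β*u₂ + β*u₃ := by
    have s1 : T/Z ≤ T/(1-A) := by gcongr
    have s2 : T/(1-A) - t₁/(1-A) = (T - t₁)/(1-A) := by ring
    have s3 : (T - t₁)/(1-A) ≤ (u₂ + u₃)/(1-A) := by
      gcongr; linarith
    have s4 : (u₂ + u₃)/(1-A) ≤ β*(u₂+u₃) := by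
      rw [div_eq_mul_inv, mul_comm]
      exact mul_le_mul_of_nonneg_right hβ1 (by linarith) |>.trans_eq rfl
    nlinarith
  have hdivl : t₁/(1-A) - T/Z ≤ Real.log (1 + β*B) + β*u₂ := by
    rcases le_or_gt 0 (t₁ - 2*B) with hcase | hcase
    · have s1 : (t₁ - 2*B)/(1-A+B) ≤ T/Z := by
        calc (t₁ - 2*B)/(1-A+B) ≤ (t₁ - 2*B)/Z := by gcongr
          _ ≤ T/Z := by gcongr
      have e1 : t₁/(1-A) - (t₁-2*B)/(1-A+B) = (t₁*B + 2*B*(1-A))/((1-A)*(1-A+B)) := by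
        field_simp; ring
      have e2 : (t₁*B + 2*B*(1-A))/((1-A)*(1-A+B)) ≤ ((1-A+B)*B + 2*B*(1-A))/((1-A)*(1-A+B)) := by
        gcongr ((?_ + _)/(_*_))
        · nlinarith
      have e3 : ((1-A+B)*B + 2*B*(1-A))/((1-A)*(1-A+B)) = B/(1-A) + 2*B/(1-A+B) := by
        field_simp
      have e4 : 2*B/(1-A+B) ≤ β*u₂ := by
        have : 2*B/(1-A+B) ≤ (2*B)*β := by
          rw [div_eq_mul_inv]
          exact mul_le_mul_of_nonneg_left hβ2 (by linarith)
        nlinarith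
      linarith
    · have s1 : t₁/(1-A) ≤ (2*B)/(1-A) := (div_le_div_iff_of_pos_right hD₁).mpr (by linarith)
      have s2 : (2*B)/(1-A) ≤ (2*B)*β := by
        rw [div_eq_mul_inv]
        exact mul_le_mul_of_nonneg_left hβ1 (by linarith)
      have s3 : 0 ≤ T/Z := div_nonneg hTnn hZ.le
      have s4 : (2*B)*β ≤ β*u₂ := by nlinarith [mul_le_mul_of_nonneg_left hu₂ hβpos.le]
      linarith
  have hu₃' : 0 ≤ β*u₃ := by positivity
  rw [abs_le]
  constructor
  · linarith
  · linarith

set_option maxHeartbeats 2000000 in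
theorem stmt8 (σ : ℝ) (hσ : 0 < σ) (p : ℕ) (hp : 0 < p) (hpe : Even p)
    (ε : ℝ) (hε : 0 < ε)
    (hpos : 0 < 1 - ε * (Nat.doubleFactorial (p - 1) : ℝ) * σ ^ p -
        ε ^ 2 / 2 * (Nat.doubleFactorial (2 * p - 1) : ℝ) * σ ^ (2 * p))
    (C : ℝ) (hC : C = (∫ x : ℝ, pG σ x * Real.exp (-ε * x ^ p))⁻¹)
    (f : ℝ → ℝ) (hf : ∀ x, f x = C * pG σ x * Real.exp (-ε * x ^ p))
    (H : ℝ) (hH : H = -∫ x : ℝ, f x * Real.log (f x))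
    (H₁ : ℝ) (hH₁ : H₁ =
      Real.log (Real.sqrt (2 * Real.pi) * σ *
          (1 - ε * σ ^ p * (Nat.doubleFactorial (p - 1) : ℝ))) +
        (1 - ε * σ ^ p * (Nat.doubleFactorial (p - 1) : ℝ))⁻¹ *
          (1 / 2 + ε * σ ^ p * ((Nat.doubleFactorial (p - 1) : ℝ) -
            (1 / 2) * (Nat.doubleFactorial (p + 1) : ℝ))))
    (β : ℝ) (hβ : β = (1 - ε * (Nat.doubleFactorial (p - 1) : ℝ) * σ ^ p -
        ε ^ 2 / 2 * (Nat.doubleFactorial (2 * p - 1) : ℝ) * σ ^ (2 * p))⁻¹) :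
    |H - H₁| ≤
      Real.log (1 + β * (ε ^ 2 / 2) * (Nat.doubleFactorial (2 * p - 1) : ℝ) * σ ^ (2 * p)) +
        β * (ε ^ 2 / 4) * (Nat.doubleFactorial (2 * p + 1) : ℝ) * σ ^ (2 * p) +
        β * (ε ^ 3 / 2) * (Nat.doubleFactorial (3 * p - 1) : ℝ) * σ ^ (3 * p) := by
  obtain ⟨q, hq⟩ := hpe
  have hp2 : p = 2 * q := by omega
  have hq1 : 1 ≤ q := by omega
  have hpe' : Even p := ⟨q, hq⟩
  set d1 : ℝ := (Nat.doubleFactorial (p - 1) : ℝ) with hd1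
  set d2 : ℝ := (Nat.doubleFactorial (2*p - 1) : ℝ) with hd2
  set d3 : ℝ := (Nat.doubleFactorial (3*p - 1) : ℝ) with hd3
  set dp1 : ℝ := (Nat.doubleFactorial (p + 1) : ℝ) with hdp1
  set dp2 : ℝ := (Nat.doubleFactorial (2*p + 1) : ℝ) with hdp2
  -- moments
  have hM0 : ∫ x : ℝ, pG σ x = 1 := by
    have := integral_pG_pow' hσ 0 0 (by omega)
    simpa [Nat.doubleFactorial] using this
  have hMp : ∫ x : ℝ, pG σ x * x ^ p = d1 * σ ^ p := integral_pG_pow' hσ p q hp2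
  have hM2 : ∫ x : ℝ, pG σ x * x ^ 2 = σ ^ 2 := by
    have := integral_pG_pow' hσ 2 1 (by omega)
    simpa [Nat.doubleFactorial] using this
  have hMp2 : ∫ x : ℝ, pG σ x * x ^ (p+2) = dp1 * σ ^ (p+2) := by
    have := integral_pG_pow' hσ (p+2) (q+1) (by omega)
    rwa [show p+2-1 = p+1 by omega] at this
  have hM2p : ∫ x : ℝ, pG σ x * x ^ (2*p) = d2 * σ ^ (2*p) :=
    integral_pG_pow' hσ (2*p) (2*q) (by omega)
  have hM2p2 : ∫ x : ℝ, pG σ x * x ^ (2*p+2) = dp2 * σ ^ (2*p+2) := by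
    have := integral_pG_pow' hσ (2*p+2) (2*q+1) (by omega)
    rwa [show 2*p+2-1 = 2*p+1 by omega] at this
  have hM3p : ∫ x : ℝ, pG σ x * x ^ (3*p) = d3 * σ ^ (3*p) :=
    integral_pG_pow' hσ (3*p) (3*q) (by omega)
  -- abbreviations
  set Z : ℝ := ∫ x : ℝ, pG σ x * Real.exp (-ε * x ^ p) with hZdef
  set S2 : ℝ := ∫ x : ℝ, pG σ x * x ^ 2 * Real.exp (-ε * x ^ p) with hS2def
  set Sp : ℝ := ∫ x : ℝ, pG σ x * x ^ p * Real.exp (-ε * x ^ p) with hSpdef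
  set A : ℝ := ε * σ ^ p * d1 with hA
  set B : ℝ := ε^2/2 * d2 * σ ^ (2*p) with hB
  set u₂ : ℝ := ε^2/4 * dp2 * σ ^ (2*p) with hu₂
  set u₃ : ℝ := ε^3/2 * d3 * σ ^ (3*p) with hu₃
  set t₁ : ℝ := 1/2 + ε * σ ^ p * (d1 - 1/2 * dp1) with ht₁
  -- positivity facts
  have hd1p : (0:ℝ) < d1 := by rw [hd1]; exact_mod_cast Nat.doubleFactorial_pos _
  have hd2p : (0:ℝ) < d2 := by rw [hd2]; exact_mod_cast Nat.doubleFactorial_pos _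
  have hd3p : (0:ℝ) < d3 := by rw [hd3]; exact_mod_cast Nat.doubleFactorial_pos _
  have hdp1p : (0:ℝ) < dp1 := by rw [hdp1]; exact_mod_cast Nat.doubleFactorial_pos _
  have hdp2p : (0:ℝ) < dp2 := by rw [hdp2]; exact_mod_cast Nat.doubleFactorial_pos _
  have hBpos : 0 < B := by rw [hB]; positivity
  have hABpos : 0 < 1 - A - B := by
    have h : 1 - A - B = 1 - ε * d1 * σ ^ p - B := by rw [hA]; ring
    rw [h]
    exact hpos
  -- Z bounds
  have sl0 := sandwich_low hσ hε hpe' 0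
  have sh0 := sandwich_high hσ hε hpe' 0
  simp only [show (2*0 : ℕ) = 0 by norm_num, show (0+p : ℕ) = p by omega,
    show (0+2*p : ℕ) = 2*p by omega, pow_zero, mul_one] at sl0 sh0
  rw [hM0, hMp] at sl0
  rw [hM0, hMp, hM2p] at sh0
  have hZl : 1 - A ≤ Z := by rw [hA]; rw [hZdef]; linarith [sl0]
  have hZu : Z ≤ 1 - A + B := by rw [hA, hB]; rw [hZdef]; linarith [sh0]
  have hZpos : 0 < Z := lt_of_lt_of_le (by linarith) hZl
  -- S2 bounds
  have sl1 := sandwich_low hσ hε hpe' 1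
  have sh1 := sandwich_high hσ hε hpe' 1
  simp only [Nat.mul_one, show (2*1+p : ℕ) = p+2 by omega, show (2*1+2*p : ℕ) = 2*p+2 by omega,
    show ((2*1 : ℕ)) = 2 by norm_num] at sl1 sh1
  rw [hM2, hMp2] at sl1
  rw [hM2, hMp2, hM2p2] at sh1
  -- Sp bounds
  have slq := sandwich_low hσ hε hpe' q
  have shq := sandwich_high hσ hε hpe' q
  simp only [show (2*q+p : ℕ) = 2*p by omega, show (2*q+2*p : ℕ) = 3*p by omega] at slq shq
  simp only [show (2*q : ℕ) = p by omega] at slq shq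
  rw [hMp, hM2p] at slq
  rw [hMp, hM2p, hM3p] at shq
  -- T and its bounds
  set T : ℝ := S2 / (2*σ^2) + ε * Sp with hT
  have hσ2 : (0:ℝ) < 2*σ^2 := by positivity
  have hpow2 : σ ^ (p+2) = σ ^ p * σ ^ 2 := pow_add σ p 2
  have hpow22 : σ ^ (2*p+2) = σ ^ (2*p) * σ ^ 2 := pow_add σ (2*p) 2
  have hS2l : 1/2 - ε * σ ^ p * dp1 / 2 ≤ S2 / (2*σ^2) := by
    rw [le_div_iff₀ hσ2]
    have h := sl1
    rw [hpow2] at h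
    have e : (1/2 - ε * σ ^ p * dp1 / 2) * (2*σ^2) = σ^2 - ε * (dp1 * (σ^p * σ^2)) := by ring
    rw [e]
    linarith [h]
  have hS2u : S2 / (2*σ^2) ≤ 1/2 - ε * σ ^ p * dp1 / 2 + u₂ := by
    rw [div_le_iff₀ hσ2]
    have h := sh1
    rw [hpow2, hpow22] at h
    rw [hu₂]
    have e : (1/2 - ε * σ ^ p * dp1 / 2 + ε^2/4 * dp2 * σ ^ (2*p)) * (2*σ^2)
        = σ^2 - ε * (dp1 * (σ^p * σ^2)) + ε^2/2 * (dp2 * (σ^(2*p) * σ^2)) := by ring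
    rw [e]
    linarith [h]
  have hSpl : ε * σ ^ p * d1 - 2*B ≤ ε * Sp := by
    have h := mul_le_mul_of_nonneg_left slq hε.le
    rw [hB]
    have e : ε * (d1 * σ ^ p - ε * (d2 * σ ^ (2*p)))
        = ε * σ ^ p * d1 - 2*(ε^2/2 * d2 * σ ^ (2*p)) := by ring
    rw [e] at h
    linarith [h]
  have hSpu : ε * Sp ≤ ε * σ ^ p * d1 - 2*B + u₃ := by
    have h := mul_le_mul_of_nonneg_left shq hε.le
    rw [hB, hu₃]
    have e : ε * (d1 * σ ^ p - ε * (d2 * σ ^ (2*p)) + ε^2/2 * (d3 * σ ^ (3*p)))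
        = ε * σ ^ p * d1 - 2*(ε^2/2 * d2 * σ ^ (2*p)) + ε^3/2 * d3 * σ ^ (3*p) := by ring
    rw [e] at h
    linarith [h]
  -- double factorial recursions
  have hdp1_nat : Nat.doubleFactorial (p+1) = (p+1) * Nat.doubleFactorial (p-1) := by
    rw [show p+1 = (p-1)+2 by omega, Nat.doubleFactorial_add_two]
  have hdp1_eq : dp1 = ((p:ℝ) + 1) * d1 := by
    rw [hdp1, hd1, hdp1_nat]; push_cast; ring
  have hdp2_nat : Nat.doubleFactorial (2*p+1) = (2*p+1) * Nat.doubleFactorial (2*p-1) := by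
    rw [show 2*p+1 = (2*p-1)+2 by omega, Nat.doubleFactorial_add_two]
  have hdp2_eq : dp2 = (2*(p:ℝ) + 1) * d2 := by
    rw [hdp2, hd2, hdp2_nat]; push_cast; ring
  have hTl : t₁ - 2*B ≤ T := by rw [hT, ht₁]; linarith
  have hTu : T ≤ t₁ - 2*B + u₂ + u₃ := by rw [hT, ht₁]; linarith
  have hTnn : 0 ≤ T := by
    have h2 : 0 ≤ S2 := by
      rw [hS2def]
      apply integral_nonneg
      intro x
      have := (pG_pos hσ x).le
      positivity
    have hxp : 0 ≤ Sp := by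
      rw [hSpdef]
      apply integral_nonneg
      intro x
      have h1 := (pG_pos hσ x).le
      have h2 := hpe'.pow_nonneg x
      positivity
    rw [hT]
    positivity
  have hpcast : (2:ℝ) ≤ (p:ℝ) := by exact_mod_cast (by omega : 2 ≤ p)
  have hu₂B : 5/2 * B ≤ u₂ := by
    rw [hu₂, hB, hdp2_eq]
    have key : 0 ≤ (ε^2 * d2 * σ ^ (2*p)) * ((p:ℝ) - 2) :=
      mul_nonneg (mul_nonneg (mul_nonneg (sq_nonneg ε) hd2p.le)
        (pow_nonneg hσ.le (2*p))) (by linarith)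
    linarith [key]
  have hu₃nn : 0 ≤ u₃ := by rw [hu₃]; positivity
  have hAnn : 0 ≤ A := by rw [hA]; positivity
  have ht₁Z : t₁ ≤ 1 - A + B := by
    have key : 0 ≤ (ε * σ ^ p * d1) * ((p:ℝ) - 2) :=
      mul_nonneg (mul_nonneg (mul_nonneg hε.le (pow_nonneg hσ.le p)) hd1p.le) (by linarith)
    have hAB' := hABpos
    rw [hA] at hAB'
    rw [ht₁, hdp1_eq, hA]
    linarith [key, hAB', hBpos]
  -- entropy formula
  have hsppos : (0:ℝ) < Real.sqrt (2 * π) * σ := by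
    have : (0:ℝ) < Real.sqrt (2 * π) := Real.sqrt_pos.mpr (by positivity)
    positivity
  have h1A : (0:ℝ) < 1 - A := by linarith
  have hβ' : β = (1 - A - B)⁻¹ := by
    rw [hβ]
    congr 1
    rw [hA]
    ring
  have hHval : H = Real.log (Real.sqrt (2 * π) * σ) + Real.log Z + T/Z := by
    rw [hH]
    have hfun : (fun x => f x * Real.log (f x))
        = fun x => (Z⁻¹ * pG σ x * Real.exp (-ε * x ^ p)) *
            Real.log (Z⁻¹ * pG σ x * Real.exp (-ε * x ^ p)) := by
      funext x
      rw [hf, hC]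
    rw [hfun, entropy_eq hσ hε hpe' Z hZdef hZpos, ← hS2def, ← hSpdef, ← hT]
    rw [inv_mul_eq_div]
  have hH₁val : H₁ = Real.log (Real.sqrt (2 * π) * σ) + Real.log (1 - A) + t₁/(1-A) := by
    rw [hH₁, Real.log_mul hsppos.ne' h1A.ne', inv_mul_eq_div]
  have hfin := final_ineq A B u₂ u₃ Z T t₁ β hBpos hABpos hβ' hZl hZu hTl hTu hTnn hu₂B hu₃nn ht₁Z
  rw [hHval, hH₁val]
  have hgoal1 : 1 + β * (ε ^ 2 / 2) * d2 * σ ^ (2 * p) = 1 + β*B := by rw [hB]; ring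
  have hgoal2 : β * (ε ^ 2 / 4) * dp2 * σ ^ (2 * p) = β*u₂ := by rw [hu₂]; ring
  have hgoal3 : β * (ε ^ 3 / 2) * d3 * σ ^ (3 * p) = β*u₃ := by rw [hu₃]; ring
  rw [hgoal1, hgoal2, hgoal3]
  calc |Real.log (Real.sqrt (2 * π) * σ) + Real.log Z + T / Z -
      (Real.log (Real.sqrt (2 * π) * σ) + Real.log (1 - A) + t₁ / (1 - A))|
      = |Real.log Z + T/Z - (Real.log (1-A) + t₁/(1-A))| := by ring_nf
    _ ≤ Real.log (1 + β*B) + β*u₂ + β*u₃ := hfin
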